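/- Let (X,w) be a properly weighted d-poset, let −1 ≤ i ≤ j ≤ d be integers, let z ∈ X(i), and let x ∈ X(j) with x ≥ z. Then w(X(d)_z)^{−1}·(F^min_{j,d}/F^max_{i,j,d})·w(x) ≤ w_z(x) ≤ w(X(d)_z)^{−1}·(F^max_{j,d}/F^min_{i,j,d})·w(x), where w_z is the weight function induced by w on the link X_z. -/

import Mathlib

open scoped Classical

noncomputable section

namespace FK

variable {V : Type*} [Fintype V] [PartialOrder V]

/-- The set of faces of dimension `i`. -/
def faces (dim : V → ℤ) (i : ℤ) : Finset V :=
  Finset.univ.filter fun x => dim x = i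

/-- The set of faces of dimension `i` lying above `z`. -/
def facesAbove (dim : V → ℤ) (i : ℤ) (z : V) : Finset V :=
  Finset.univ.filter fun x => dim x = i ∧ z ≤ x

/-- The set of faces of dimension `i` lying below `y`. -/
def facesBelow (dim : V → ℤ) (i : ℤ) (y : V) : Finset V :=
  Finset.univ.filter fun x => dim x = i ∧ x ≤ y

/-- The set of faces of dimension `j` lying between `x` and `z`. -/
def facesBetween (dim : V → ℤ) (j : ℤ) (x z : V) : Finset V :=
  Finset.univ.filter fun y => dim y = j ∧ x ≤ y ∧ y ≤ z

/-- Total weight of a finite set of faces. -/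
def wsum (w : V → ℝ) (A : Finset V) : ℝ := ∑ x ∈ A, w x

/-- `(V, dim)` is a `d`-poset with least face `bot` (of dimension `-1`). -/
structure IsDPoset (dim : V → ℤ) (d : ℤ) (bot : V) : Prop where
  dim_strictMono : ∀ ⦃x y : V⦄, x < y → dim x < dim y
  dim_covBy : ∀ ⦃x y : V⦄, x ⋖ y → dim y = dim x + 1
  bot_le : ∀ x : V, bot ≤ x
  dim_bot : dim bot = -1
  pure : ∀ x : V, ∃ y : V, x ≤ y ∧ dim y = d

/-- Graded poset axioms. -/
structure IsGraded (dim : V → ℤ) : Prop where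
  dim_strictMono : ∀ ⦃x y : V⦄, x < y → dim x < dim y
  dim_covBy : ∀ ⦃x y : V⦄, x ⋖ y → dim y = dim x + 1

/-- `w` is a proper weight function on the `d`-poset `(V, dim)`. -/
structure IsProperWeight (dim : V → ℤ) (d : ℤ) (w : V → ℝ) : Prop where
  pos : ∀ x : V, 0 < w x
  total : wsum w (faces dim d) = 1
  eq : ∀ x : V, w x = ∑ y ∈ facesAbove dim d x, w y / ((facesBelow dim (dim x) y).card : ℝ)

/-- The weight function induced on the link of `z`. -/
def linkWeight (dim : V → ℤ) (d : ℤ) (w : V → ℝ) (z x : V) : ℝ :=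
  (wsum w (facesAbove dim d z))⁻¹ *
    ∑ y ∈ facesAbove dim d x, w y / ((facesBetween dim (dim x) z y).card : ℝ)

/-- An `R`-orientation on the graded poset `(V, dim)`. -/
structure IsOrientation (R : Type*) [CommRing R] (dim : V → ℤ) (sgn : V → V → R) : Prop where
  isUnit : ∀ ⦃x y : V⦄, x ⋖ y → IsUnit (sgn y x)
  sum_eq_zero : ∀ ⦃x z : V⦄, x ≤ z → dim z = dim x + 2 →
    ∑ y ∈ Finset.univ.filter (fun y => x < y ∧ y < z), sgn z y * sgn y x = 0

/-- The restriction maps of a sheaf compose. -/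
structure IsSheafRes (R : Type*) [CommRing R] (F : V → Type*)
    [∀ x, AddCommGroup (F x)] [∀ x, Module R (F x)]
    (res : ∀ x y : V, x ≤ y → (F x →ₗ[R] F y)) : Prop where
  refl : ∀ x : V, res x x le_rfl = LinearMap.id
  trans : ∀ ⦃x y z : V⦄ (hxy : x ≤ y) (hyz : y ≤ z),
    (res y z hyz).comp (res x y hxy) = res x z (hxy.trans hyz)

/-- `i`-cochains with coefficients in the sheaf `F`. -/
abbrev Cochain (dim : V → ℤ) (F : V → Type*) (i : ℤ) : Type _ :=
  ∀ x : {x : V // dim x = i}, F x.1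

/-- Cochains on the link of `u`, indexed by the ambient dimension `i`
(i.e. link-dimension `i - dim u - 1`). -/
abbrev LCochain (dim : V → ℤ) (F : V → Type*) (u : V) (i : ℤ) : Type _ :=
  ∀ x : {x : V // dim x = i ∧ u ≤ x}, F x.1

section Sheaf

variable {R : Type*} [CommRing R] (dim : V → ℤ) (F : V → Type*)
  [∀ x, AddCommGroup (F x)] [∀ x, Module R (F x)]
  (sgn : V → V → R) (res : ∀ x y : V, x ≤ y → (F x →ₗ[R] F y))
  (w : V → ℝ) (d : ℤ)

/-- The coboundary map, from dimension `i` to dimension `j` (intended: `j = i + 1`). -/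
def coboundary (i j : ℤ) (f : Cochain dim F i) : Cochain dim F j := fun y =>
  ∑ x : {x : V // dim x = i},
    if h : x.1 ≤ y.1 then sgn y.1 x.1 • res x.1 y.1 h (f x) else 0

/-- The coboundary map on the link of `u`. -/
def lcoboundary (u : V) (i j : ℤ) (f : LCochain dim F u i) : LCochain dim F u j := fun y =>
  ∑ x : {x : V // dim x = i ∧ u ≤ x},
    if h : x.1 ≤ y.1 then sgn y.1 x.1 • res x.1 y.1 h (f x) else 0

/-- Weighted Hamming norm of a cochain. -/
def cnorm {i : ℤ} (f : Cochain dim F i) : ℝ :=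
  ∑ x : {x : V // dim x = i}, if f x ≠ 0 then w x.1 else 0

/-- Norm of a cochain on the link of `u`, w.r.t. the weight induced on the link. -/
def lnorm (u : V) {i : ℤ} (f : LCochain dim F u i) : ℝ :=
  ∑ x : {x : V // dim x = i ∧ u ≤ x}, if f x ≠ 0 then linkWeight dim d w u x.1 else 0

/-- `i`-cocycles. -/
def cocycles (i : ℤ) : Set (Cochain dim F i) :=
  {f | coboundary dim F sgn res i (i + 1) f = 0}

/-- `i`-coboundaries. -/
def coboundariesSet (i : ℤ) : Set (Cochain dim F i) :=
  {f | ∃ g : Cochain dim F (i - 1), coboundary dim F sgn res (i - 1) i g = f}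

/-- Weighted Hamming distance from a cochain to a set of cochains. -/
def distTo {i : ℤ} (f : Cochain dim F i) (S : Set (Cochain dim F i)) : ℝ :=
  sInf ((fun g => cnorm dim F w (f - g)) '' S)

/-- Coboundaries on the link of `u`, at ambient dimension `i`. -/
def lcoboundariesSet (u : V) (i : ℤ) : Set (LCochain dim F u i) :=
  {f | ∃ g : LCochain dim F u (i - 1), lcoboundary dim F sgn res u (i - 1) i g = f}

/-- `cbe_{i - dim u - 1}(X_u, w_u, F_u) ≥ ε`, expressed at ambient dimension `i`. -/
def LinkCbeGe (u : V) (i : ℤ) (ε : ℝ) : Prop :=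
  ∀ f : LCochain dim F u i,
    ε * sInf ((fun g => lnorm dim F w d u (f - g)) '' lcoboundariesSet dim F sgn res u i)
      ≤ lnorm dim F w d u (lcoboundary dim F sgn res u i (i + 1) f)

/-- Extension of a link cochain by zero. -/
def extendByZero (u : V) {i : ℤ} (b : LCochain dim F u i) : Cochain dim F i := fun x =>
  if h : u ≤ x.1 then b ⟨x.1, x.2, h⟩ else 0

/-- `f` is mock `q`-locally minimal at `u`. -/
def MockMinAt (q : ℝ) (m : ℤ) (f : Cochain dim F m) (u : V) : Prop :=
  ∀ g : LCochain dim F u (m - 1),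
    cnorm dim F w f ≤
      cnorm dim F w (f + extendByZero dim F u (lcoboundary dim F sgn res u (m - 1) m g)) +
        q * w u

/-- `f` is mock `q`-locally minimal. -/
def MockMin (q : ℝ) (m : ℤ) (f : Cochain dim F m) : Prop :=
  ∀ u : V, 0 ≤ dim u → dim u ≤ m → MockMinAt dim F sgn res w q m f u

end Sheaf

/-- `ugr(X_u, w_u)` is an `(α, β)`-skeleton expander. -/
def LinkUgrSkeletonExpander (dim : V → ℤ) (d : ℤ) (w : V → ℝ) (u : V) (α β : ℝ) : Prop :=
  ∀ A ⊆ facesAbove dim (dim u + 1) u,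
    wsum (linkWeight dim d w u)
        ((facesAbove dim (dim u + 2) u).filter fun e =>
          ∃ x ∈ A, ∃ y ∈ A, x ≠ y ∧ x ≤ e ∧ y ≤ e)
      ≤ α * wsum (linkWeight dim d w u) A + β * wsum (linkWeight dim d w u) A ^ 2

/-- `ugr(X, w)` is an `(α, β)`-skeleton expander. -/
def UgrSkeletonExpander (dim : V → ℤ) (w : V → ℝ) (α β : ℝ) : Prop :=
  ∀ A ⊆ faces dim 0,
    wsum w ((faces dim 1).filter fun e => ∃ x ∈ A, ∃ y ∈ A, x ≠ y ∧ x ≤ e ∧ y ≤ e)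
      ≤ α * wsum w A + β * wsum w A ^ 2

/-- `NI^{1,1,2}(X, w)` is an `(α, β)`-skeleton expander. -/
def NI112SkeletonExpander (dim : V → ℤ) (w : V → ℝ) (bot : V) (α β : ℝ) : Prop :=
  ∀ A ⊆ faces dim 1,
    wsum w ((faces dim 2).filter fun z =>
        ∃ x ∈ A, ∃ y ∈ A, x ≠ y ∧ x ≤ z ∧ y ≤ z ∧ ∀ t : V, t ≤ x → t ≤ y → t = bot)
      ≤ α * wsum w A + β * wsum w A ^ 2

/-- Pairs of an `i`-face and a `k`-face that are incident. -/
def incidentPairs (dim : V → ℤ) (i k : ℤ) : Finset (V × V) :=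
  Finset.univ.filter fun p => dim p.1 = i ∧ dim p.2 = k ∧ p.1 ≤ p.2

/-- `F^max_{i,j,k}(X)`. -/
def Fmax (dim : V → ℤ) (i j k : ℤ) : ℕ :=
  (incidentPairs dim i k).sup fun p => (facesBetween dim j p.1 p.2).card

/-- `F^min_{i,j,k}(X)`. -/
def Fmin (dim : V → ℤ) (i j k : ℤ) : ℕ :=
  if h : (incidentPairs dim i k).Nonempty then
    ((incidentPairs dim i k).image fun p => (facesBetween dim j p.1 p.2).card).min'
      (h.image _)
  else 0

end FK

section Aux

variable {V : Type*} [Fintype V] [PartialOrder V]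

/-- In a graded finite poset, between incident faces there is a face of every
intermediate dimension. -/
lemma exists_dim_between (dim : V → ℤ)
    (hmono : ∀ ⦃x y : V⦄, x < y → dim x < dim y)
    (hcov : ∀ ⦃x y : V⦄, x ⋖ y → dim y = dim x + 1) (j : ℤ) :
    ∀ n : ℕ, ∀ a b : V, a ≤ b → dim a + n = j → j ≤ dim b →
      ∃ t : V, dim t = j ∧ a ≤ t ∧ t ≤ b := by
  intro n
  induction n with
  | zero => intro a b hab h1 h2; exact ⟨a, by simpa using h1, le_rfl, hab⟩
  | succ n ih =>
    intro a b hab h1 h2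
    have hlt : dim a < j := by push_cast at h1; omega
    have hne : a ≠ b := fun h => by subst h; omega
    have habs : a < b := lt_of_le_of_ne hab hne
    have hS : (Finset.univ.filter fun t : V => a < t ∧ t ≤ b).Nonempty :=
      ⟨b, by simp [habs, le_refl]⟩
    obtain ⟨t, htS, htmin⟩ : ∃ t ∈ Finset.univ.filter (fun t : V => a < t ∧ t ≤ b), ∀ c ∈ Finset.univ.filter (fun t : V => a < t ∧ t ≤ b), ¬ c < t := (Finset.exists_minimal hS).imp fun t ht => ⟨ht.1, fun c hc hct => ht.not_lt hc hct⟩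
    simp only [Finset.mem_filter, Finset.mem_univ, true_and] at htS
    have hcovat : a ⋖ t := by
      refine ⟨htS.1, fun c hac hct => ?_⟩
      exact htmin c (by simp [hac, le_trans hct.le htS.2]) hct
    have hdimt : dim t = dim a + 1 := hcov hcovat
    obtain ⟨s, hs1, hs2, hs3⟩ := ih t b htS.2 (by push_cast at h1 ⊢; omega) h2
    exact ⟨s, hs1, le_trans htS.1.le hs2, hs3⟩

lemma Fmin_le_card {dim : V → ℤ} {i j k : ℤ} {p : V × V}
    (hp : p ∈ FK.incidentPairs dim i k) :
    FK.Fmin dim i j k ≤ (FK.facesBetween dim j p.1 p.2).card := by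
  rw [FK.Fmin, dif_pos ⟨p, hp⟩]
  exact Finset.min'_le _ _ (Finset.mem_image_of_mem _ hp)

lemma card_le_Fmax {dim : V → ℤ} {i j k : ℤ} {p : V × V}
    (hp : p ∈ FK.incidentPairs dim i k) :
    (FK.facesBetween dim j p.1 p.2).card ≤ FK.Fmax dim i j k := by
  exact Finset.le_sup (f := fun p : V × V => (FK.facesBetween dim j p.1 p.2).card) hp

lemma one_le_Fmin {dim : V → ℤ} {d : ℤ} {bot : V} (hX : FK.IsDPoset dim d bot)
    {i j : ℤ} (hij : i ≤ j) (hjd : j ≤ d)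
    (hne : (FK.incidentPairs dim i d).Nonempty) :
    1 ≤ FK.Fmin dim i j d := by
  rw [FK.Fmin, dif_pos hne]
  have hmem := Finset.min'_mem
    ((FK.incidentPairs dim i d).image fun p => (FK.facesBetween dim j p.1 p.2).card)
    (hne.image _)
  obtain ⟨m, hmemp, hcard⟩ := Finset.mem_image.mp hmem
  obtain ⟨hmem, hcard⟩ := And.intro hmemp hcard
  simp only [FK.incidentPairs, Finset.mem_filter, Finset.mem_univ, true_and] at hmem
  obtain ⟨h1, h2, h3⟩ := hmem
  obtain ⟨t, ht1, ht2, ht3⟩ := exists_dim_between dim hX.dim_strictMono hX.dim_covBy j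
      (j - i).toNat m.1 m.2 h3 (by rw [h1]; omega) (by omega)
  rw [← hcard]
  refine Finset.card_pos.mpr ⟨t, ?_⟩
  simp [FK.facesBetween, ht1, ht2, ht3]

end Aux

/-- bounds on the weight induced on a link. -/
theorem statement18
    (V : Type) [Fintype V] [PartialOrder V] (dim : V → ℤ) (d : ℤ) (bot : V)
    (hX : FK.IsDPoset dim d bot)
    (w : V → ℝ) (hw : FK.IsProperWeight dim d w)
    (i j : ℤ) (hi : -1 ≤ i) (hij : i ≤ j) (hjd : j ≤ d)
    (z : V) (hz : dim z = i) (x : V) (hx : dim x = j) (hzx : z ≤ x) :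
    (FK.wsum w (FK.facesAbove dim d z))⁻¹ *
          ((FK.Fmin dim (-1) j d : ℝ) / (FK.Fmax dim i j d : ℝ)) * w x ≤
        FK.linkWeight dim d w z x ∧
      FK.linkWeight dim d w z x ≤
        (FK.wsum w (FK.facesAbove dim d z))⁻¹ *
          ((FK.Fmax dim (-1) j d : ℝ) / (FK.Fmin dim i j d : ℝ)) * w x := by
  classical
  -- positivity of the total weight above z
  have hWpos : 0 < FK.wsum w (FK.facesAbove dim d z) := by
    obtain ⟨y₀, hzy₀, hy₀⟩ := hX.pure z
    refine Finset.sum_pos (fun y _ => hw.pos y) ⟨y₀, ?_⟩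
    simp [FK.facesAbove, hy₀, hzy₀]
  have hWinv : (0:ℝ) ≤ (FK.wsum w (FK.facesAbove dim d z))⁻¹ := by positivity
  -- per-face facts
  have key : ∀ y ∈ FK.facesAbove dim d x,
      (1 ≤ (FK.facesBetween dim j z y).card ∧
       1 ≤ (FK.facesBelow dim j y).card) ∧
      (FK.Fmin dim i j d ≤ (FK.facesBetween dim j z y).card ∧
       (FK.facesBetween dim j z y).card ≤ FK.Fmax dim i j d) ∧
      (FK.Fmin dim (-1) j d ≤ (FK.facesBelow dim j y).card ∧
       (FK.facesBelow dim j y).card ≤ FK.Fmax dim (-1) j d) := by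
    intro y hy
    simp only [FK.facesAbove, Finset.mem_filter, Finset.mem_univ, true_and] at hy
    obtain ⟨hyd, hxy⟩ := hy
    have hzy : z ≤ y := le_trans hzx hxy
    have hxb : x ∈ FK.facesBetween dim j z y := by
      simp [FK.facesBetween, hx, hzx, hxy]
    have hxb' : x ∈ FK.facesBelow dim j y := by
      simp [FK.facesBelow, hx, hxy]
    have hpi : ((z, y) : V × V) ∈ FK.incidentPairs dim i d := by
      simp [FK.incidentPairs, hz, hyd, hzy]
    have hp1 : ((bot, y) : V × V) ∈ FK.incidentPairs dim (-1) d := by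
      simp [FK.incidentPairs, hX.dim_bot, hyd, hX.bot_le]
    have hbe : FK.facesBetween dim j bot y = FK.facesBelow dim j y := by
      ext t; simp [FK.facesBetween, FK.facesBelow, hX.bot_le t]
    refine ⟨⟨Finset.card_pos.mpr ⟨x, hxb⟩, Finset.card_pos.mpr ⟨x, hxb'⟩⟩,
      ⟨Fmin_le_card hpi, card_le_Fmax hpi⟩, ?_, ?_⟩
    · have := Fmin_le_card (j := j) hp1; rw [hbe] at this; exact this
    · have := card_le_Fmax (j := j) hp1; rw [hbe] at this; exact this
  -- Fmin i j d ≥ 1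
  have hFminPos : 1 ≤ FK.Fmin dim i j d := by
    obtain ⟨y₀, hzy₀, hy₀⟩ := hX.pure z
    refine one_le_Fmin hX hij hjd ⟨(z, y₀), ?_⟩
    simp [FK.incidentPairs, hz, hy₀, hzy₀]
  -- rewrite the weight of x
  have hwx : w x = ∑ y ∈ FK.facesAbove dim d x,
      w y / ((FK.facesBelow dim j y).card : ℝ) := by
    have := hw.eq x; rwa [hx] at this
  have hlink : FK.linkWeight dim d w z x = (FK.wsum w (FK.facesAbove dim d z))⁻¹ *
      ∑ y ∈ FK.facesAbove dim d x, w y / ((FK.facesBetween dim j z y).card : ℝ) := by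
    rw [FK.linkWeight, hx]
  constructor
  · rw [hlink, mul_assoc]
    refine mul_le_mul_of_nonneg_left ?_ hWinv
    rw [hwx, Finset.mul_sum]
    refine Finset.sum_le_sum fun y hy => ?_
    obtain ⟨⟨hB1, hL1⟩, ⟨_, hBmax⟩, ⟨hLmin, _⟩⟩ := key y hy
    have hBpos : (0:ℝ) < ((FK.facesBetween dim j z y).card : ℝ) := by
      exact_mod_cast hB1
    have hMpos : (0:ℝ) < ((FK.Fmax dim i j d : ℕ) : ℝ) * ((FK.facesBelow dim j y).card : ℝ) := by
      have : 1 ≤ FK.Fmax dim i j d := le_trans hB1 hBmax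
      have h1 : (0:ℝ) < ((FK.Fmax dim i j d : ℕ) : ℝ) := by exact_mod_cast this
      have h2 : (0:ℝ) < ((FK.facesBelow dim j y).card : ℝ) := by exact_mod_cast hL1
      positivity
    rw [div_mul_div_comm, div_le_div_iff₀ hMpos hBpos]
    have hnat : (FK.Fmin dim (-1) j d) * (FK.facesBetween dim j z y).card ≤
        (FK.facesBelow dim j y).card * (FK.Fmax dim i j d) :=
      Nat.mul_le_mul hLmin hBmax
    have hr : ((FK.Fmin dim (-1) j d : ℕ) : ℝ) * ((FK.facesBetween dim j z y).card : ℝ) ≤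
        ((FK.facesBelow dim j y).card : ℝ) * ((FK.Fmax dim i j d : ℕ) : ℝ) := by
      exact_mod_cast hnat
    nlinarith [hw.pos y]
  · rw [hlink, mul_assoc]
    refine mul_le_mul_of_nonneg_left ?_ hWinv
    rw [hwx, Finset.mul_sum]
    refine Finset.sum_le_sum fun y hy => ?_
    obtain ⟨⟨hB1, hL1⟩, ⟨hBmin, _⟩, ⟨_, hLmax⟩⟩ := key y hy
    have hBpos : (0:ℝ) < ((FK.facesBetween dim j z y).card : ℝ) := by
      exact_mod_cast hB1
    have hMpos : (0:ℝ) < ((FK.Fmin dim i j d : ℕ) : ℝ) * ((FK.facesBelow dim j y).card : ℝ) := by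
      have h1 : (0:ℝ) < ((FK.Fmin dim i j d : ℕ) : ℝ) := by exact_mod_cast hFminPos
      have h2 : (0:ℝ) < ((FK.facesBelow dim j y).card : ℝ) := by exact_mod_cast hL1
      positivity
    rw [div_mul_div_comm, div_le_div_iff₀ hBpos hMpos]
    have hnat : (FK.Fmin dim i j d) * (FK.facesBelow dim j y).card ≤
        (FK.facesBetween dim j z y).card * (FK.Fmax dim (-1) j d) :=
      Nat.mul_le_mul hBmin hLmax
    have hr : ((FK.Fmin dim i j d : ℕ) : ℝ) * ((FK.facesBelow dim j y).card : ℝ) ≤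
        ((FK.facesBetween dim j z y).card : ℝ) * ((FK.Fmax dim (-1) j d : ℕ) : ℝ) := by
      exact_mod_cast hnat
    nlinarith [hw.pos y]
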